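/- Let O be an order in an imaginary quadratic field K with conductor u. An ideal 𝔞 ⊲ O is coprime to u (i.e., 𝔞 + uO = O) if and only if its norm N(𝔞) = #(O/𝔞) is coprime to u. -/

import Mathlib

open NumberField

/-- In a finite commutative ring, a natural number is a unit iff it is coprime to the
cardinality. -/
lemma isUnit_natCast_iff_coprime_card {R : Type*} [CommRing R] [Fintype R] (n : ℕ) :
    IsUnit (n : R) ↔ Nat.Coprime n (Fintype.card R) := by
  constructor
  · intro h
    by_contra hnc
    obtain ⟨p, hp, hpn, hpc⟩ := Nat.Prime.not_coprime_iff_dvd.mp hnc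
    haveI : Fact p.Prime := ⟨hp⟩
    exact not_isUnit_prime_of_dvd_card hpc
      (isUnit_of_dvd_unit (Nat.cast_dvd_cast (α := R) hpn) h)
  · intro h
    have hchar : ringChar R ∣ Fintype.card R :=
      ringChar.dvd (Nat.cast_card_eq_zero R)
    have h1 : IsUnit ((n : ZMod (Fintype.card R))) := (ZMod.isUnit_iff_coprime n _).mpr h
    have h2 := h1.map (ZMod.castHom hchar R)
    exact (map_natCast (ZMod.castHom hchar R) n) ▸ h2

lemma sup_span_singleton_eq_top_iff {R : Type*} [CommRing R] (I : Ideal R) (x : R) :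
    I ⊔ Ideal.span {x} = ⊤ ↔ IsUnit (Ideal.Quotient.mk I x) := by
  constructor
  · intro h
    have h1 : (1 : R) ∈ I ⊔ Ideal.span {x} := h ▸ Submodule.mem_top
    obtain ⟨a, ha, b, hb, hab⟩ := Submodule.mem_sup.mp h1
    obtain ⟨c, rfl⟩ := Ideal.mem_span_singleton'.mp hb
    refine IsUnit.of_mul_eq_one (Ideal.Quotient.mk I c) ?_
    have hz : Ideal.Quotient.mk I a = 0 := Ideal.Quotient.eq_zero_iff_mem.mpr ha
    calc Ideal.Quotient.mk I x * Ideal.Quotient.mk I c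
        = Ideal.Quotient.mk I (a + c * x) := by rw [map_add, hz, zero_add, map_mul]; ring
      _ = 1 := by rw [hab, map_one]
  · intro h
    obtain ⟨c0, hc⟩ := isUnit_iff_exists_inv.mp h
    obtain ⟨c, rfl⟩ := Ideal.Quotient.mk_surjective c0
    rw [← map_mul] at hc
    have hmem : (1 : R) - x * c ∈ I := by
      rw [← Ideal.Quotient.eq_zero_iff_mem, map_sub, hc, map_one, sub_self]
    rw [Ideal.eq_top_iff_one]
    have hxc : x * c ∈ Ideal.span {x} := Ideal.mem_span_singleton'.mpr ⟨c, mul_comm c x⟩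
    have h1 : (1 : R) = (1 - x * c) + x * c := by ring
    rw [h1]
    exact Submodule.add_mem _ (Ideal.mem_sup_left hmem) (Ideal.mem_sup_right hxc)

theorem ideal_coprime_conductor_iff_norm_coprime
    (K : Type*) [Field K] [NumberField K]
    (hdeg : Module.finrank ℚ K = 2)
    (himag : ∀ v : InfinitePlace K, v.IsComplex)
    (O : Subalgebra ℤ K)
    (hOint : ∀ x : O, IsIntegral ℤ (x : K))
    (hOfull : ∃ x : O, (x : K) ∉ Set.range (algebraMap ℚ K))
    (u : ℕ) (hu0 : 0 < u)
    (hu : (∀ x : 𝓞 K, (u : K) * x ∈ O) ∧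
      ∀ m : ℕ, 0 < m → (∀ x : 𝓞 K, (m : K) * x ∈ O) → u ∣ m)
    (𝔞 : Ideal O) (h𝔞 : 𝔞 ≠ ⊥) :
    𝔞 ⊔ Ideal.span {(u : O)} = ⊤ ↔ Nat.Coprime (Nat.card (O ⧸ 𝔞)) u := by
  classical
  let f : O →ₗ[ℤ] 𝓞 K :=
    { toFun := fun x => ⟨(x : K), hOint x⟩
      map_add' := fun x y => by ext; simp; rfl
      map_smul' := fun m x => by ext; simp; rw [← zsmul_eq_mul]; rfl }
  have hf : Function.Injective f := by
    intro x y h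
    have h2 : ((x : K)) = ((y : K)) := congrArg (fun t : 𝓞 K => (t : K)) h
    exact Subtype.ext h2
  haveI : Module.Finite ℤ O := Module.Finite.of_injective f hf
  haveI : NoZeroSMulDivisors ℤ O := by
    constructor
    intro c x h
    have h' : (c : O) * x = 0 := by rw [← zsmul_eq_mul]; exact h
    rcases mul_eq_zero.mp h' with h0 | h0
    · left
      have h2 : (c : K) = 0 := by exact_mod_cast congrArg (fun t : O => (t : K)) h0
      exact_mod_cast h2
    · right; exact h0
  haveI : Module.Free ℤ O := Module.free_of_finite_type_torsion_free'
  haveI : Fintype (O ⧸ 𝔞) := @Fintype.ofFinite _ (Ideal.finiteQuotientOfFreeOfNeBot 𝔞 h𝔞)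
  rw [Nat.card_eq_fintype_card, sup_span_singleton_eq_top_iff, map_natCast,
    isUnit_natCast_iff_coprime_card, Nat.coprime_comm]
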